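/- Let A and B be unital ℂ-algebras with ℤ₂-gradings 𝒜 and ℬ, and let u ∈ A be homogeneous of degree 0 with u² = 1 implementing the grading of A (u·a = (−1)^i·a·u for every i : ZMod 2 and every a ∈ 𝒜 i). Then in the graded tensor product A ⊗' B, for every a ∈ A and every b ∈ B the elements a ⊗' 1 and 1 ⊗' b₀ + u ⊗' b₁ commute: (a ⊗' 1)·(1 ⊗' b₀ + u ⊗' b₁) = (1 ⊗' b₀ + u ⊗' b₁)·(a ⊗' 1). (Commutation of the Klein generators, key step in the proof of Proposition 3.1.) -/

import Mathlib

open scoped TensorProduct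
open DirectSum

lemma smul_gtmul {A B : Type*} [Ring A] [Ring B] [Algebra ℂ A] [Algebra ℂ B]
    (𝒜 : ZMod 2 → Submodule ℂ A) (ℬ : ZMod 2 → Submodule ℂ B)
    [GradedAlgebra 𝒜] [GradedAlgebra ℬ] (c : ℂ) (x : A) (y : B) :
    ((c • x) ᵍ⊗ₜ[ℂ] y : 𝒜 ᵍ⊗[ℂ] ℬ) = c • (x ᵍ⊗ₜ[ℂ] y) := by
  show GradedTensorProduct.of ℂ 𝒜 ℬ ((c • x) ⊗ₜ y) = c • GradedTensorProduct.of ℂ 𝒜 ℬ (x ⊗ₜ y)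
  rw [← TensorProduct.smul_tmul', map_smul]

/-- **Commutation of the Klein generators** (key step in the proof of Proposition 3.1).
In the graded tensor product `𝒜 ᵍ⊗[ℂ] ℬ`, the elements `a ⊗' 1` and
`1 ⊗' b₀ + u ⊗' b₁` commute, when `u ∈ 𝒜 0`, `u² = 1` implements the grading of `A`. -/
theorem klein_generators_commute
    {A B : Type*} [Ring A] [Ring B] [Algebra ℂ A] [Algebra ℂ B]
    (𝒜 : ZMod 2 → Submodule ℂ A) (ℬ : ZMod 2 → Submodule ℂ B)
    [GradedAlgebra 𝒜] [GradedAlgebra ℬ]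
    (u : A) (hu0 : u ∈ 𝒜 0) (hu2 : u * u = 1)
    (hu : ∀ (i : ZMod 2) (a : A), a ∈ 𝒜 i → u * a = ((-1 : ℂ) ^ i.val) • (a * u)) :
    ∀ (a : A) (b : B),
      ((a ᵍ⊗ₜ[ℂ] (1 : B) : 𝒜 ᵍ⊗[ℂ] ℬ))
          * ((1 : A) ᵍ⊗ₜ[ℂ] ((DirectSum.decompose ℬ b 0 : ℬ 0) : B)
              + u ᵍ⊗ₜ[ℂ] ((DirectSum.decompose ℬ b 1 : ℬ 1) : B))
        = ((1 : A) ᵍ⊗ₜ[ℂ] ((DirectSum.decompose ℬ b 0 : ℬ 0) : B)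
              + u ᵍ⊗ₜ[ℂ] ((DirectSum.decompose ℬ b 1 : ℬ 1) : B))
            * (a ᵍ⊗ₜ[ℂ] (1 : B)) := by
  intro a b
  set b0 : ℬ 0 := DirectSum.decompose ℬ b 0 with hb0
  set b1 : ℬ 1 := DirectSum.decompose ℬ b 1 with hb1
  set z : 𝒜 ᵍ⊗[ℂ] ℬ := (1 : A) ᵍ⊗ₜ[ℂ] (b0 : B) + u ᵍ⊗ₜ[ℂ] (b1 : B) with hz
  have key : ∀ a : A, (a ᵍ⊗ₜ[ℂ] (1 : B) : 𝒜 ᵍ⊗[ℂ] ℬ) * z = z * (a ᵍ⊗ₜ[ℂ] (1 : B)) := by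
    intro a
    induction a using DirectSum.Decomposition.inductionOn 𝒜 with
    | zero =>
        have h0 : ((0 : A) ᵍ⊗ₜ[ℂ] (1 : B) : 𝒜 ᵍ⊗[ℂ] ℬ) = 0 :=
          map_zero (GradedTensorProduct.includeLeftRingHom 𝒜 ℬ)
        rw [h0, zero_mul, mul_zero]
    | homogeneous m =>
        rename_i i
        rw [hz, mul_add, add_mul]
        have e1 : ((m : A) ᵍ⊗ₜ[ℂ] (1 : B) : 𝒜 ᵍ⊗[ℂ] ℬ) * (1 : A) ᵍ⊗ₜ[ℂ] (b0 : B)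
            = (1 : A) ᵍ⊗ₜ[ℂ] (b0 : B) * (m : A) ᵍ⊗ₜ[ℂ] (1 : B) := by
          rw [GradedTensorProduct.tmul_one_mul_one_tmul,
            GradedTensorProduct.tmul_zero_coe_mul_coe_tmul, one_mul, mul_one]
        have eL : ((m : A) ᵍ⊗ₜ[ℂ] (1 : B) : 𝒜 ᵍ⊗[ℂ] ℬ) * u ᵍ⊗ₜ[ℂ] (b1 : B)
            = ((m : A) * u) ᵍ⊗ₜ[ℂ] (b1 : B) := by
          have := GradedTensorProduct.tmul_one_mul_coe_tmul 𝒜 ℬ (m : A) (⟨u, hu0⟩ : 𝒜 0) b1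
          exact this
        have eR : (u ᵍ⊗ₜ[ℂ] (b1 : B) : 𝒜 ᵍ⊗[ℂ] ℬ) * (m : A) ᵍ⊗ₜ[ℂ] (1 : B)
            = ((m : A) * u) ᵍ⊗ₜ[ℂ] (b1 : B) := by
          rw [GradedTensorProduct.tmul_coe_mul_coe_tmul, hu i m m.2, smul_gtmul, mul_one]
          fin_cases i
          · erw [show ((1 : ZMod 2) * 0) = 0 from rfl, show ZMod.val (0 : ZMod 2) = 0 from rfl]
            simp
          · erw [show ((1 : ZMod 2) * 1) = 1 from rfl, show ZMod.val (1 : ZMod 2) = 1 from rfl]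
            simp [Units.smul_def]
        rw [e1, eL, eR]
    | add x y hx hy =>
        have hadd : ((x + y : A) ᵍ⊗ₜ[ℂ] (1 : B) : 𝒜 ᵍ⊗[ℂ] ℬ)
            = x ᵍ⊗ₜ[ℂ] (1 : B) + y ᵍ⊗ₜ[ℂ] (1 : B) :=
          map_add (GradedTensorProduct.includeLeftRingHom 𝒜 ℬ) x y
        rw [hadd, add_mul, hx, hy, ← mul_add]
  exact key a
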